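/- Let D := Σ_{n≥1} d_n·z^n and B := Σ_{n≥0} b_n·z^n in ℤ[[z]], where d_n counts weighted Motzkin paths of length n with total increment −1 and nonnegative proper partial heights, and b_n counts unconstrained weighted Motzkin paths of length n with total increment 0. Then (1 − D²)·B = 1 + 4D + D² in ℤ[[z]]. -/

import Mathlib

/-- A weighted Motzkin step: an up step, a down step, or one of four distinguishable
horizontal steps. -/
inductive WStep : Type
  | up : WStep
  | down : WStep
  | h1 : WStep
  | h2 : WStep
  | h3 : WStep
  | h4 : WStep

/-- The height increment of a weighted Motzkin step. -/
def WStep.inc : WStep → ℤ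
  | .up => 1
  | .down => -1
  | _ => 0

/-- The total height increment of a weighted Motzkin path. -/
def hsum (p : List WStep) : ℤ := (p.map WStep.inc).sum

/-- `dnum n` : number of weighted Motzkin paths of length `n` with total increment `-1`
whose proper partial heights (after each step except the last) are all nonnegative. -/
noncomputable def dnum (n : ℕ) : ℕ :=
  Nat.card {p : List WStep // p.length = n ∧ hsum p = -1 ∧
    ∀ i < n, 0 ≤ hsum (p.take i)}

/-- `bnum n` : number of unconstrained weighted Motzkin paths of length `n` with total
increment `0`. -/
noncomputable def bnum (n : ℕ) : ℕ :=
  Nat.card {p : List WStep // p.length = n ∧ hsum p = 0}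

/-- The generating series `D = Σ_{n≥1} d_n z^n`. -/
noncomputable def Dser : PowerSeries ℤ := PowerSeries.mk fun n => (dnum n : ℤ)

/-- The generating series `B = Σ_{n≥0} b_n z^n`. -/
noncomputable def Bser : PowerSeries ℤ := PowerSeries.mk fun n => (bnum n : ℤ)



deriving instance DecidableEq for WStep

instance : Fintype WStep :=
  Fintype.ofList [.up, .down, .h1, .h2, .h3, .h4] (fun x => by cases x <;> simp)

/-! ### Basic lemmas about `hsum` -/

lemma hsum_nil : hsum [] = 0 := rfl

lemma hsum_cons (a : WStep) (l : List WStep) : hsum (a :: l) = a.inc + hsum l := by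
  simp [hsum]

lemma hsum_append (l m : List WStep) : hsum (l ++ m) = hsum l + hsum m := by
  simp [hsum]

lemma inc_le_one (s : WStep) : s.inc ≤ 1 := by cases s <;> simp [WStep.inc]

lemma neg_one_le_inc (s : WStep) : -1 ≤ s.inc := by cases s <;> simp [WStep.inc]

/-- Discrete intermediate value: prefix sums start at `0`, so any value between
`hsum q` and `0` is attained by some prefix. -/
lemma exists_take_eq (q : List WStep) (c : ℤ) (h1 : hsum q ≤ c) (h2 : c ≤ 0) :
    ∃ i ≤ q.length, hsum (q.take i) = c := by
  induction q generalizing c with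
  | nil =>
    refine ⟨0, by simp, ?_⟩
    simp only [List.take_nil, hsum_nil]
    rw [hsum_nil] at h1; omega
  | cons a r ih =>
    rcases eq_or_lt_of_le h2 with hc | hc
    · exact ⟨0, by simp, by simp [hsum, hc]⟩
    · obtain ⟨i, hi, hv⟩ := ih (c - a.inc)
        (by rw [hsum_cons] at h1; omega)
        (by have := inc_le_one a; have := neg_one_le_inc a; omega)
      refine ⟨i + 1, by simpa using hi, ?_⟩
      rw [List.take_succ_cons, hsum_cons, hv]; ring

/-- First passage to `-1`: a minimal prefix with sum `-1`, having nonnegative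
proper prefix sums. -/
lemma exists_fp {q : List WStep} (h : hsum q ≤ -1) :
    ∃ t ≤ q.length, hsum (q.take t) = -1 ∧ ∀ i < t, 0 ≤ hsum (q.take i) := by
  classical
  obtain ⟨i0, hi0, hv0⟩ := exists_take_eq q (-1) h (by norm_num)
  have hex : ∃ i, hsum (q.take i) = -1 := ⟨i0, hv0⟩
  refine ⟨Nat.find hex, le_trans (Nat.find_min' hex hv0) hi0, Nat.find_spec hex, ?_⟩
  intro i hi
  by_contra hneg
  push_neg at hneg
  obtain ⟨j, hj, hvj⟩ := exists_take_eq (q.take i) (-1) (by omega) (by norm_num)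
  rw [List.take_take] at hvj
  have := Nat.find_min' hex hvj
  omega

/-- Uniqueness of the first-passage decomposition. -/
lemma unique_split {q1 q2 q1' q2' : List WStep}
    (he : q1 ++ q2 = q1' ++ q2')
    (h1 : hsum q1 = -1) (h1' : hsum q1' = -1)
    (hp : ∀ i < q1.length, 0 ≤ hsum (q1.take i))
    (hp' : ∀ i < q1'.length, 0 ≤ hsum (q1'.take i)) :
    q1 = q1' ∧ q2 = q2' := by
  have key : ∀ {a b a' b' : List WStep}, a ++ b = a' ++ b' → hsum a = -1 →
      (∀ i < a'.length, 0 ≤ hsum (a'.take i)) → a'.length ≤ a.length := by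
    intro a b a' b' he h1 hp'
    by_contra hlt
    push_neg at hlt
    have e1 : (a ++ b).take a.length = a := List.take_left
    have e2 : (a' ++ b').take a.length = a'.take a.length :=
      List.take_append_of_le_length hlt.le
    have := hp' a.length hlt
    rw [← e2, ← he, e1, h1] at this
    omega
  have hlen : q1.length = q1'.length :=
    le_antisymm (key he.symm h1' hp) (key he h1 hp')
  have hq1 : q1 = q1' := by
    have : (q1 ++ q2).take q1.length = q1 := List.take_left
    rw [he, hlen, List.take_left] at this
    exact this.symm
  subst hq1
  exact ⟨rfl, List.append_cancel_left he⟩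

/-! ### The subtypes and finiteness -/

abbrev DT (n : ℕ) : Type := {p : List WStep // p.length = n ∧ hsum p = -1 ∧
    ∀ i < n, 0 ≤ hsum (p.take i)}

abbrev BT (n : ℕ) : Type := {p : List WStep // p.length = n ∧ hsum p = 0}

lemma dnum_eq (n : ℕ) : dnum n = Nat.card (DT n) := rfl
lemma bnum_eq (n : ℕ) : bnum n = Nat.card (BT n) := rfl

instance finite_len (n : ℕ) (P : List WStep → Prop) :
    Finite {p : List WStep // p.length = n ∧ P p} := by
  have h1 : Finite {l : List WStep // l.length = n} :=
    (List.finite_length_eq WStep n).to_subtype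
  exact Finite.of_injective
    (fun p => (⟨p.1, p.2.1⟩ : {l : List WStep // l.length = n}))
    (fun a b h => by
      apply Subtype.ext
      have h2 : (⟨a.1, a.2.1⟩ : {l : List WStep // l.length = n}) = ⟨b.1, b.2.1⟩ := h
      exact Subtype.mk_eq_mk.mp h2)

instance (n : ℕ) : Finite (DT n) := finite_len n _
instance (n : ℕ) : Finite (BT n) := finite_len n _

lemma ncard_sigma {m : ℕ} (F : Fin m → Type) [∀ i, Finite (F i)] :
    Nat.card (Σ i, F i) = ∑ i, Nat.card (F i) := by
  letI := fun i => Fintype.ofFinite (F i)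
  simp [Nat.card_eq_fintype_card]

/-! ### Horizontal steps -/

def hstep : Fin 4 → WStep := ![WStep.h1, WStep.h2, WStep.h3, WStep.h4]

lemma hstep_inc (i : Fin 4) : (hstep i).inc = 0 := by fin_cases i <;> rfl

lemma hstep_inj : Function.Injective hstep := by decide

lemma hstep_ne_up (i : Fin 4) : hstep i ≠ WStep.up := by fin_cases i <;> decide

lemma hstep_ne_down (i : Fin 4) : hstep i ≠ WStep.down := by fin_cases i <;> decide

lemma wstep_tricho (s : WStep) : s = WStep.up ∨ s = WStep.down ∨ ∃ i : Fin 4, hstep i = s := by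
  cases s
  · exact Or.inl rfl
  · exact Or.inr (Or.inl rfl)
  · exact Or.inr (Or.inr ⟨0, rfl⟩)
  · exact Or.inr (Or.inr ⟨1, rfl⟩)
  · exact Or.inr (Or.inr ⟨2, rfl⟩)
  · exact Or.inr (Or.inr ⟨3, rfl⟩)

/-! ### Small cardinalities -/

lemma dnum_zero : dnum 0 = 0 := by
  rw [dnum_eq]
  have : IsEmpty (DT 0) := by
    refine ⟨fun p => ?_⟩
    obtain ⟨l, hl, hs, -⟩ := p
    rw [List.length_eq_zero_iff] at hl
    subst hl
    rw [hsum_nil] at hs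
    omega
  simp [Nat.card_of_isEmpty]

lemma bnum_zero : bnum 0 = 1 := by
  rw [bnum_eq]
  have e : BT 0 ≃ Unit := {
    toFun := fun _ => PUnit.unit
    invFun := fun _ => ⟨[], by simp [hsum_nil]⟩
    left_inv := by
      rintro ⟨l, hl, -⟩
      apply Subtype.ext
      exact (List.length_eq_zero_iff.mp hl).symm
    right_inv := fun _ => rfl }
  rw [Nat.card_congr e]
  simp

lemma dnum_one : dnum 1 = 1 := by
  rw [dnum_eq]
  have e : DT 1 ≃ Unit := {
    toFun := fun _ => PUnit.unit
    invFun := fun _ => ⟨[WStep.down],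
      ⟨rfl, by simp [hsum, WStep.inc], by
        intro i hi
        interval_cases i
        simp [hsum_nil]⟩⟩
    left_inv := by
      rintro ⟨l, hl, hs, -⟩
      apply Subtype.ext
      match l, hl with
      | [s], _ =>
        cases s <;> simp [hsum, WStep.inc] at hs ⊢
    right_inv := fun _ => rfl }
  rw [Nat.card_congr e]
  simp
/-! ### Negation of paths -/

def WStep.negs : WStep → WStep
  | .up => .down
  | .down => .up
  | s => s

def nlist (l : List WStep) : List WStep := l.map WStep.negs

lemma negs_negs (s : WStep) : s.negs.negs = s := by cases s <;> rfl

lemma inc_negs (s : WStep) : s.negs.inc = - s.inc := by cases s <;> rfl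

lemma nlist_nlist (l : List WStep) : nlist (nlist l) = l := by
  induction l with
  | nil => rfl
  | cons a r ih => simp [nlist] at ih ⊢; simp [negs_negs, ih]

lemma length_nlist (l : List WStep) : (nlist l).length = l.length := List.length_map _

lemma hsum_nlist (l : List WStep) : hsum (nlist l) = - hsum l := by
  induction l with
  | nil => rfl
  | cons a r ih =>
    show hsum (a.negs :: nlist r) = _
    rw [hsum_cons, hsum_cons, ih, inc_negs]; ring

lemma take_nlist (l : List WStep) (i : ℕ) : (nlist l).take i = nlist (l.take i) :=
  List.map_take.symm

lemma nlist_append (a b : List WStep) : nlist (a ++ b) = nlist a ++ nlist b :=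
  List.map_append

/-! ### Gluing lemma for prefix positivity -/

lemma glue_up_prefix {a b : List WStep} (ha2 : hsum a = -1)
    (hap : ∀ i < a.length, 0 ≤ hsum (a.take i))
    (hbp : ∀ i < b.length, 0 ≤ hsum (b.take i)) :
    ∀ i < (WStep.up :: (a ++ b)).length, 0 ≤ hsum ((WStep.up :: (a ++ b)).take i) := by
  intro i hi
  match i with
  | 0 => simp [hsum_nil]
  | (j+1) =>
    rw [List.take_succ_cons, hsum_cons]
    have hup : WStep.up.inc = 1 := rfl
    rw [hup]
    simp only [List.length_cons, List.length_append] at hi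
    rcases Nat.lt_trichotomy j a.length with hj | hj | hj
    · rw [List.take_append_of_le_length hj.le]
      linarith [hap j hj]
    · subst hj
      rw [List.take_left, ha2]; norm_num
    · obtain ⟨k, rfl⟩ : ∃ k, j = a.length + k := ⟨j - a.length, by omega⟩
      rw [List.take_length_add_append, hsum_append, ha2]
      have hk : k < b.length := by omega
      linarith [hbp k hk]

/-! ### The decomposition map for `D` -/

def gD (n : ℕ) :
    (Fin 4 × DT (n+1)) ⊕ (Σ t : Fin (n+2), DT t.1 × DT (n+1-t.1)) → DT (n+2)
  | .inl (i, q) => ⟨hstep i :: q.1, by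
      obtain ⟨hl, hs, hp⟩ := q.2
      refine ⟨by simp [hl], by rw [hsum_cons, hstep_inc, hs]; ring, ?_⟩
      intro i hi
      match i with
      | 0 => simp [hsum_nil]
      | (j+1) =>
        rw [List.take_succ_cons, hsum_cons, hstep_inc]
        have := hp j (by omega)
        linarith⟩
  | .inr ⟨t, q1, q2⟩ => ⟨WStep.up :: (q1.1 ++ q2.1), by
      obtain ⟨hl1, hs1, hp1⟩ := q1.2
      obtain ⟨hl2, hs2, hp2⟩ := q2.2
      have ht : t.1 ≤ n + 1 := by omega
      refine ⟨by simp [hl1, hl2]; omega, ?_, ?_⟩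
      · rw [hsum_cons, hsum_append, hs1, hs2]; rfl
      · have hglue := glue_up_prefix hs1 (by rw [hl1]; exact hp1) (by rw [hl2]; exact hp2)
        intro i hi
        apply hglue
        simp [hl1, hl2]
        omega⟩

lemma gD_bij (n : ℕ) : Function.Bijective (gD n) := by
  constructor
  · rintro (⟨i, q⟩ | ⟨t, q1, q2⟩) (⟨i', q'⟩ | ⟨t', q1', q2'⟩) h
    · have hl := Subtype.mk_eq_mk.mp h
      rw [List.cons.injEq] at hl
      obtain ⟨h1, h2⟩ := hl
      have hi : i = i' := hstep_inj h1
      have hq : q = q' := Subtype.ext h2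
      rw [hi, hq]
    · have hl := Subtype.mk_eq_mk.mp h
      rw [List.cons.injEq] at hl
      exact absurd hl.1 (hstep_ne_up i)
    · have hl := Subtype.mk_eq_mk.mp h
      rw [List.cons.injEq] at hl
      exact absurd hl.1.symm (hstep_ne_up i')
    · have hl := Subtype.mk_eq_mk.mp h
      rw [List.cons.injEq] at hl
      have happ := hl.2
      obtain ⟨e1, e2⟩ := unique_split happ q1.2.2.1 q1'.2.2.1
        (by rw [q1.2.1]; exact q1.2.2.2) (by rw [q1'.2.1]; exact q1'.2.2.2)
      have htt : t = t' := by
        apply Fin.ext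
        rw [← q1.2.1, ← q1'.2.1, e1]
      subst htt
      have hq1 : q1 = q1' := Subtype.ext e1
      have hq2 : q2 = q2' := Subtype.ext e2
      rw [hq1, hq2]
  · rintro ⟨l, hl, hs, hp⟩
    cases l with
    | nil => simp at hl
    | cons s q =>
      have hqlen : q.length = n + 1 := by simpa using hl
      rcases wstep_tricho s with rfl | rfl | ⟨i, rfl⟩
      · -- up
        have hup : WStep.up.inc = 1 := rfl
        have hq : hsum q = -2 := by rw [hsum_cons, hup] at hs; linarith
        obtain ⟨t, htle, hts, htp⟩ := exists_fp (q := q) (by omega)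
        rw [hqlen] at htle
        have hdropsum : hsum (q.drop t) = -1 := by
          have hh := hsum_append (q.take t) (q.drop t)
          rw [List.take_append_drop, hts, hq] at hh
          linarith
        refine ⟨Sum.inr ⟨⟨t, by omega⟩, ⟨q.take t, ?_⟩, ⟨q.drop t, ?_⟩⟩, ?_⟩
        · show (q.take t).length = t ∧ hsum (q.take t) = -1 ∧
            ∀ i < t, 0 ≤ hsum ((q.take t).take i)
          refine ⟨by rw [List.length_take]; omega, hts, ?_⟩
          intro i hi
          rw [List.take_take, min_eq_left hi.le]
          exact htp i hi
        · show (q.drop t).length = n + 1 - t ∧ hsum (q.drop t) = -1 ∧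
            ∀ i < n + 1 - t, 0 ≤ hsum ((q.drop t).take i)
          refine ⟨by rw [List.length_drop, hqlen], hdropsum, ?_⟩
          intro i hi
          have e : q.take (t + i) = q.take t ++ (q.drop t).take i := List.take_add
          have h1 : 0 ≤ 1 + hsum (q.take (t + i)) := by
            have h2 := hp (t + i + 1) (by omega)
            rw [List.take_succ_cons, hsum_cons, hup] at h2
            exact h2
          rw [e, hsum_append, hts] at h1
          linarith
        · apply Subtype.ext
          show WStep.up :: (q.take t ++ q.drop t) = WStep.up :: q
          rw [List.take_append_drop]
      · -- down : impossible
        exfalso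
        have h1 := hp 1 (by omega)
        rw [show (WStep.down :: q).take 1 = [WStep.down] from rfl] at h1
        simp [hsum, WStep.inc] at h1
      · -- horizontal
        refine ⟨Sum.inl (i, ⟨q, hqlen, ?_, ?_⟩), rfl⟩
        · rw [hsum_cons, hstep_inc] at hs; linarith
        · intro j hj
          have h2 := hp (j + 1) (by omega)
          rw [List.take_succ_cons, hsum_cons, hstep_inc] at h2
          linarith

lemma dnum_rec (n : ℕ) :
    dnum (n+2) = 4 * dnum (n+1) + ∑ t ∈ Finset.range (n+2), dnum t * dnum (n+1-t) := by
  rw [dnum_eq, ← Nat.card_eq_of_bijective _ (gD_bij n), Nat.card_sum, Nat.card_prod,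
    ncard_sigma]
  congr 1
  · rw [Nat.card_eq_fintype_card, Fintype.card_fin, dnum_eq]
  · rw [← Fin.sum_univ_eq_sum_range (fun t => dnum t * dnum (n+1-t)) (n+2)]
    exact Finset.sum_congr rfl fun t _ => by rw [Nat.card_prod, dnum_eq, dnum_eq]
/-! ### The decomposition map for `B` -/

def gB (n : ℕ) :
    (Fin 4 × BT n) ⊕ (Σ t : Fin (n+1), DT t.1 × BT (n-t.1)) ⊕
      (Σ t : Fin (n+1), DT t.1 × BT (n-t.1)) → BT (n+1)
  | .inl (i, q) => ⟨hstep i :: q.1, by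
      obtain ⟨hl, hs⟩ := q.2
      exact ⟨by simp [hl], by rw [hsum_cons, hstep_inc, hs]; ring⟩⟩
  | .inr (.inl ⟨t, q1, q2⟩) => ⟨WStep.up :: (q1.1 ++ q2.1), by
      obtain ⟨hl1, hs1, -⟩ := q1.2
      obtain ⟨hl2, hs2⟩ := q2.2
      have ht : t.1 ≤ n := by omega
      refine ⟨by simp [hl1, hl2]; omega, ?_⟩
      rw [hsum_cons, hsum_append, hs1, hs2]; rfl⟩
  | .inr (.inr ⟨t, q1, q2⟩) => ⟨WStep.down :: (nlist q1.1 ++ q2.1), by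
      obtain ⟨hl1, hs1, -⟩ := q1.2
      obtain ⟨hl2, hs2⟩ := q2.2
      have ht : t.1 ≤ n := by omega
      refine ⟨by simp [hl1, hl2, length_nlist]; omega, ?_⟩
      rw [hsum_cons, hsum_append, hsum_nlist, hs1, hs2]; rfl⟩

lemma gB_bij (n : ℕ) : Function.Bijective (gB n) := by
  constructor
  · rintro (⟨i, q⟩ | ⟨t, q1, q2⟩ | ⟨t, q1, q2⟩) (⟨i', q'⟩ | ⟨t', q1', q2'⟩ | ⟨t', q1', q2'⟩) h <;>
      have hl := Subtype.mk_eq_mk.mp h <;> rw [List.cons.injEq] at hl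
    · obtain ⟨h1, h2⟩ := hl
      have hi : i = i' := hstep_inj h1
      have hq : q = q' := Subtype.ext h2
      rw [hi, hq]
    · exact absurd hl.1 (hstep_ne_up i)
    · exact absurd hl.1 (hstep_ne_down i)
    · exact absurd hl.1.symm (hstep_ne_up i')
    · obtain ⟨e1, e2⟩ := unique_split hl.2 q1.2.2.1 q1'.2.2.1
        (by rw [q1.2.1]; exact q1.2.2.2) (by rw [q1'.2.1]; exact q1'.2.2.2)
      have htt : t = t' := by
        apply Fin.ext
        rw [← q1.2.1, ← q1'.2.1, e1]
      subst htt
      rw [Subtype.ext e1, Subtype.ext e2]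
    · exact absurd hl.1 (fun hh => by cases hh)
    · exact absurd hl.1.symm (hstep_ne_down i')
    · exact absurd hl.1.symm (fun hh => by cases hh)
    · have happ : q1.1 ++ nlist q2.1 = q1'.1 ++ nlist q2'.1 := by
        have := congrArg nlist hl.2
        rwa [nlist_append, nlist_append, nlist_nlist, nlist_nlist] at this
      obtain ⟨e1, e2⟩ := unique_split happ q1.2.2.1 q1'.2.2.1
        (by rw [q1.2.1]; exact q1.2.2.2) (by rw [q1'.2.1]; exact q1'.2.2.2)
      have e2' : q2.1 = q2'.1 := by
        have := congrArg nlist e2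
        rwa [nlist_nlist, nlist_nlist] at this
      have htt : t = t' := by
        apply Fin.ext
        rw [← q1.2.1, ← q1'.2.1, e1]
      subst htt
      rw [Subtype.ext e1, Subtype.ext e2']
  · rintro ⟨l, hl, hs⟩
    cases l with
    | nil => simp at hl
    | cons s q =>
      have hqlen : q.length = n := by simpa using hl
      rcases wstep_tricho s with rfl | rfl | ⟨i, rfl⟩
      · -- up
        have hup : WStep.up.inc = 1 := rfl
        have hq : hsum q = -1 := by rw [hsum_cons, hup] at hs; linarith
        obtain ⟨t, htle, hts, htp⟩ := exists_fp (q := q) (by omega)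
        rw [hqlen] at htle
        have hdropsum : hsum (q.drop t) = 0 := by
          have hh := hsum_append (q.take t) (q.drop t)
          rw [List.take_append_drop, hts, hq] at hh
          linarith
        refine ⟨Sum.inr (Sum.inl ⟨⟨t, by omega⟩, ⟨q.take t, ?_⟩, ⟨q.drop t, ?_⟩⟩), ?_⟩
        · show (q.take t).length = t ∧ hsum (q.take t) = -1 ∧
            ∀ i < t, 0 ≤ hsum ((q.take t).take i)
          refine ⟨by rw [List.length_take]; omega, hts, ?_⟩
          intro i hi
          rw [List.take_take, min_eq_left hi.le]
          exact htp i hi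
        · exact ⟨by rw [List.length_drop, hqlen], hdropsum⟩
        · apply Subtype.ext
          show WStep.up :: (q.take t ++ q.drop t) = WStep.up :: q
          rw [List.take_append_drop]
      · -- down
        have hdn : WStep.down.inc = -1 := rfl
        have hq : hsum q = 1 := by rw [hsum_cons, hdn] at hs; linarith
        set r := nlist q with hr
        have hrq : hsum r = -1 := by rw [hr, hsum_nlist, hq]
        have hrlen : r.length = n := by rw [hr, length_nlist, hqlen]
        obtain ⟨t, htle, hts, htp⟩ := exists_fp (q := r) (by omega)
        rw [hrlen] at htle
        have hdropsum : hsum (nlist (r.drop t)) = 0 := by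
          have hh := hsum_append (r.take t) (r.drop t)
          rw [List.take_append_drop, hts, hrq] at hh
          rw [hsum_nlist]
          linarith
        refine ⟨Sum.inr (Sum.inr ⟨⟨t, by omega⟩, ⟨r.take t, ?_⟩, ⟨nlist (r.drop t), ?_⟩⟩), ?_⟩
        · show (r.take t).length = t ∧ hsum (r.take t) = -1 ∧
            ∀ i < t, 0 ≤ hsum ((r.take t).take i)
          refine ⟨by rw [List.length_take]; omega, hts, ?_⟩
          intro i hi
          rw [List.take_take, min_eq_left hi.le]
          exact htp i hi
        · refine ⟨?_, hdropsum⟩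
          show (nlist (r.drop t)).length = n - t
          rw [length_nlist, List.length_drop]
          omega
        · apply Subtype.ext
          show WStep.down :: (nlist (r.take t) ++ nlist (r.drop t)) = WStep.down :: q
          rw [← nlist_append, List.take_append_drop, hr, nlist_nlist]
      · -- horizontal
        refine ⟨Sum.inl (i, ⟨q, hqlen, ?_⟩), rfl⟩
        rw [hsum_cons, hstep_inc] at hs; linarith

lemma bnum_rec (n : ℕ) :
    bnum (n+1) = 4 * bnum n + 2 * ∑ t ∈ Finset.range (n+1), dnum t * bnum (n-t) := by
  have hS : Nat.card (Σ t : Fin (n+1), DT t.1 × BT (n-t.1)) =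
      ∑ t ∈ Finset.range (n+1), dnum t * bnum (n-t) := by
    rw [ncard_sigma, ← Fin.sum_univ_eq_sum_range (fun t => dnum t * bnum (n-t)) (n+1)]
    exact Finset.sum_congr rfl fun t _ => by rw [Nat.card_prod, dnum_eq, bnum_eq]
  rw [bnum_eq, ← Nat.card_eq_of_bijective _ (gB_bij n), Nat.card_sum, Nat.card_sum,
    Nat.card_prod, hS]
  rw [Nat.card_eq_fintype_card, Fintype.card_fin, bnum_eq]
  ring
/-! ### Power series identities -/

lemma coeff_Dser (n : ℕ) : PowerSeries.coeff n Dser = (dnum n : ℤ) :=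
  PowerSeries.coeff_mk n _

lemma coeff_Bser (n : ℕ) : PowerSeries.coeff n Bser = (bnum n : ℤ) :=
  PowerSeries.coeff_mk n _

lemma coeff_four_mul (n : ℕ) (f : PowerSeries ℤ) :
    PowerSeries.coeff n (4 * f) = 4 * PowerSeries.coeff n f := by
  rw [show (4 : PowerSeries ℤ) = PowerSeries.C (R := ℤ) 4 from (map_ofNat (PowerSeries.C (R := ℤ)) 4).symm,
    PowerSeries.coeff_C_mul]

lemma coeff_two_mul (n : ℕ) (f : PowerSeries ℤ) :
    PowerSeries.coeff n (2 * f) = 2 * PowerSeries.coeff n f := by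
  rw [show (2 : PowerSeries ℤ) = PowerSeries.C (R := ℤ) 2 from (map_ofNat (PowerSeries.C (R := ℤ)) 2).symm,
    PowerSeries.coeff_C_mul]

lemma hD_eq : (PowerSeries.X : PowerSeries ℤ) * (1 + 4 * Dser + Dser ^ 2) = Dser := by
  ext n
  cases n with
  | zero =>
    have hd0 : (PowerSeries.constantCoeff) Dser = 0 := by
      rw [← PowerSeries.coeff_zero_eq_constantCoeff, coeff_Dser, dnum_zero, Nat.cast_zero]
    simp [PowerSeries.coeff_zero_eq_constantCoeff, map_mul, PowerSeries.constantCoeff_X, hd0]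
  | succ m =>
    rw [PowerSeries.coeff_succ_X_mul, map_add, map_add, coeff_four_mul, coeff_Dser,
      coeff_Dser, PowerSeries.coeff_one, sq, PowerSeries.coeff_mul,
      Finset.Nat.sum_antidiagonal_eq_sum_range_succ_mk]
    simp only [coeff_Dser]
    cases m with
    | zero =>
      simp [dnum_zero, dnum_one]
    | succ k =>
      rw [if_neg (by omega), dnum_rec k]
      push_cast
      ring
  
lemma hB_eq : Bser = 1 + 4 * (PowerSeries.X * Bser) +
    2 * (PowerSeries.X * (Dser * Bser)) := by
  ext n
  cases n with
  | zero =>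
    have hb0 : (PowerSeries.constantCoeff) Bser = 1 := by
      rw [← PowerSeries.coeff_zero_eq_constantCoeff, coeff_Bser, bnum_zero, Nat.cast_one]
    simp [PowerSeries.coeff_zero_eq_constantCoeff, map_add, map_mul,
      PowerSeries.constantCoeff_X, hb0]
  | succ m =>
    rw [coeff_Bser, map_add, map_add, PowerSeries.coeff_one, coeff_four_mul, coeff_two_mul,
      PowerSeries.coeff_succ_X_mul, PowerSeries.coeff_succ_X_mul, coeff_Bser,
      PowerSeries.coeff_mul, Finset.Nat.sum_antidiagonal_eq_sum_range_succ_mk]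
    simp only [coeff_Dser, coeff_Bser]
    rw [if_neg (by omega), bnum_rec m]
    push_cast
    ring

theorem B_in_terms_of_D : (1 - Dser ^ 2) * Bser = 1 + 4 * Dser + Dser ^ 2 := by
  have hX : (PowerSeries.X : PowerSeries ℤ) ≠ 0 := PowerSeries.X_ne_zero
  apply mul_left_cancel₀ hX
  linear_combination (Bser - 1) * hD_eq + Dser * hB_eq
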